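/- Let F be a subfield of ℝ, let f be a polynomial with coefficients in F, and let A, B, y ∈ F with A < B (regarded as real numbers). Then y > sSup { f(x) | x ∈ [A,B] } if and only if there exists δ ∈ F with δ > 0 such that the polynomial f' − δ (the derivative of f minus the constant δ, as a polynomial over F) is separable, and y > sSup { f(x) − δ·x | x ∈ [A,B] } + δ · max(|A|, |B|). -/

import Mathlib

open Polynomial

private lemma bad_finite (F : Subfield ℝ) (g : Polynomial F) :
    {δ : F | ¬ (g - C δ).Separable}.Finite := by
  classical
  by_cases hg : derivative g = 0
  · have : g = C (g.coeff 0) := eq_C_of_derivative_eq_zero hg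
    refine Set.Finite.subset (Set.finite_singleton (g.coeff 0)) ?_
    intro δ hδ
    simp only [Set.mem_setOf_eq] at hδ
    by_contra hne
    simp only [Set.mem_singleton_iff] at hne
    apply hδ
    rw [this, ← C_sub]
    exact (separable_C _).mpr (isUnit_iff_ne_zero.mpr (sub_ne_zero.mpr (Ne.symm hne)))
  · set φ : F →+* ℂ := Complex.ofRealHom.comp F.subtype with hφ
    have hinj : Function.Injective φ := φ.injective
    refine Set.Finite.subset
      (Set.Finite.preimage hinj.injOn
        (((((derivative g).map φ).roots.toFinset).image
          (fun r => (g.map φ).eval r)).finite_toSet)) ?_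
    intro δ hδ
    simp only [Set.mem_setOf_eq] at hδ
    have hmap : ¬ ((g - C δ).map φ).Separable := fun h => hδ ((separable_map φ).mp h)
    have hne : (g - C δ).map φ ≠ 0 := by
      intro h
      have : g - C δ = 0 := map_injective φ hinj (by simpa using h)
      apply hg
      have : g = C δ := by linear_combination (norm := ring_nf) this
      rw [this, derivative_C]
    have hnc : ¬ IsCoprime ((g - C δ).map φ) (((g - C δ).map φ).derivative) := by
      intro h; exact hmap h
    rw [← EuclideanDomain.gcd_isUnit_iff] at hnc
    set p := (g - C δ).map φ
    have hgcd0 : EuclideanDomain.gcd p p.derivative ≠ 0 := by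
      intro h
      exact hne ((EuclideanDomain.gcd_eq_zero_iff.mp h)).1
    have hdeg : 0 < (EuclideanDomain.gcd p p.derivative).degree := by
      rcases lt_or_eq_of_le (zero_le_degree_iff.mpr hgcd0) with h | h
      · exact h
      · exact absurd (isUnit_iff_degree_eq_zero.mpr h.symm) hnc
    obtain ⟨r, hr⟩ := Complex.exists_root hdeg
    have hrp : p.eval r = 0 :=
      eval_eq_zero_of_dvd_of_eval_eq_zero (EuclideanDomain.gcd_dvd_left _ _) hr
    have hrp' : p.derivative.eval r = 0 :=
      eval_eq_zero_of_dvd_of_eval_eq_zero (EuclideanDomain.gcd_dvd_right _ _) hr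
    have hpd : p.derivative = (derivative g).map φ := by
      simp [p, derivative_map]
    have hpe : p.eval r = (g.map φ).eval r - φ δ := by
      simp [p, Polynomial.map_sub]
    simp only [Set.mem_preimage, Finset.coe_image, Set.mem_image, Finset.mem_coe,
      Multiset.mem_toFinset]
    refine ⟨r, ?_, ?_⟩
    · rw [mem_roots']
      exact ⟨by simpa [Polynomial.map_eq_zero_iff hinj] using hg, by rw [← hpd]; exact hrp'⟩
    · rw [hpe] at hrp
      exact sub_eq_zero.mp hrp

private lemma coe_pos_iff (F : Subfield ℝ) (δ : F) : 0 < δ ↔ (0:ℝ) < (δ:ℝ) := by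
  exact Iff.rfl

/-- Lemma 1(1): for a subfield `F ⊆ ℝ`, a polynomial `f ∈ F[X]` and `A, B, y ∈ F` with
`A < B`, one has `y > sup_{x ∈ [A,B]} f(x)` iff there is an admissible `δ > 0` in `F`
(i.e. `f' - δ` is separable) with
`y > sup_{x ∈ [A,B]} (f(x) - δ·x) + δ·max(|A|,|B|)`. -/
theorem gt_sSup_iff_exists_admissible
    (F : Subfield ℝ) (f : Polynomial F) (A B y : F) (hAB : (A : ℝ) < B) :
    sSup {z : ℝ | ∃ x ∈ Set.Icc (A : ℝ) (B : ℝ), Polynomial.eval₂ F.subtype x f = z}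
        < (y : ℝ) ↔
      ∃ δ : F, 0 < δ ∧ (derivative f - C δ).Separable ∧
        sSup {z : ℝ | ∃ x ∈ Set.Icc (A : ℝ) (B : ℝ),
            Polynomial.eval₂ F.subtype x f - (δ : ℝ) * x = z}
          + (δ : ℝ) * max |(A : ℝ)| |(B : ℝ)| < (y : ℝ) := by
  classical
  set g : ℝ → ℝ := fun x => Polynomial.eval₂ F.subtype x f with hgdef
  have hgc : Continuous g := by
    have : g = fun x => (f.map F.subtype).eval x := by
      funext x; rw [eval_map]
    rw [this]; exact (f.map F.subtype).continuous
  set M : ℝ := max |(A:ℝ)| |(B:ℝ)| with hMdef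
  have hM0 : 0 < M := by
    rcases lt_or_ge 0 (B:ℝ) with h | h
    · exact lt_max_of_lt_right (abs_pos.mpr (ne_of_gt h))
    · exact lt_max_of_lt_left (abs_pos.mpr (ne_of_lt (lt_of_lt_of_le hAB h)))
  have hS1 : {z : ℝ | ∃ x ∈ Set.Icc (A : ℝ) (B : ℝ), Polynomial.eval₂ F.subtype x f = z}
      = g '' Set.Icc (A:ℝ) (B:ℝ) := rfl
  have hS1ne : (g '' Set.Icc (A:ℝ) (B:ℝ)).Nonempty :=
    ⟨g A, ⟨(A:ℝ), ⟨le_refl _, le_of_lt hAB⟩, rfl⟩⟩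
  have hS1bdd : BddAbove (g '' Set.Icc (A:ℝ) (B:ℝ)) :=
    (isCompact_Icc.image hgc).bddAbove
  have habs : ∀ x ∈ Set.Icc (A:ℝ) (B:ℝ), |x| ≤ M := fun x hx =>
    abs_le_max_abs_abs hx.1 hx.2
  have hS2 : ∀ δ : F, {z : ℝ | ∃ x ∈ Set.Icc (A : ℝ) (B : ℝ),
      Polynomial.eval₂ F.subtype x f - (δ : ℝ) * x = z}
      = (fun x => g x - (δ:ℝ) * x) '' Set.Icc (A:ℝ) (B:ℝ) := fun δ => rfl
  have hS2ne : ∀ δ : F, ((fun x => g x - (δ:ℝ) * x) '' Set.Icc (A:ℝ) (B:ℝ)).Nonempty :=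
    fun δ => ⟨g A - (δ:ℝ) * A, ⟨(A:ℝ), ⟨le_refl _, le_of_lt hAB⟩, rfl⟩⟩
  have hS2bdd : ∀ δ : F, BddAbove ((fun x => g x - (δ:ℝ) * x) '' Set.Icc (A:ℝ) (B:ℝ)) :=
    fun δ => (isCompact_Icc.image
      (hgc.sub (continuous_const.mul continuous_id))).bddAbove
  rw [hS1]
  constructor
  · intro hlt
    set s := sSup (g '' Set.Icc (A:ℝ) (B:ℝ)) with hs
    set ε : ℝ := ((y:ℝ) - s)/(2*M) with hε
    have hε0 : 0 < ε := div_pos (by linarith) (by linarith)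
    obtain ⟨q, hq0, hqε⟩ := exists_rat_btwn hε0
    have hq0' : 0 < q := by exact_mod_cast hq0
    have hT : Set.Infinite {δ : F | 0 < (δ:ℝ) ∧ (δ:ℝ) < ε} := by
      apply Set.infinite_of_injective_forall_mem
        (f := fun n : ℕ => ((q / (n+1) : ℚ) : F))
      · intro m n hmn
        simp only [Rat.cast_inj] at hmn
        field_simp at hmn
        have hmn' : (m:ℚ) = n := by linarith
        exact_mod_cast hmn'
      · intro n
        have hcoe : (((q / (n+1) : ℚ) : F) : ℝ) = ((q / (n+1) : ℚ) : ℝ) := by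
          exact map_ratCast F.subtype _
        have hpos : (0:ℚ) < q / (n+1) := by positivity
        have hle : (q / (n+1) : ℚ) ≤ q := by
          rw [div_le_iff₀ (by positivity)]
          nlinarith [hq0']
        constructor
        · rw [hcoe]; exact_mod_cast hpos
        · rw [hcoe]
          calc ((q / (n+1) : ℚ) : ℝ) ≤ (q:ℝ) := by exact_mod_cast hle
            _ < ε := hqε
    obtain ⟨δ, hδmem⟩ := (hT.diff (bad_finite F (derivative f))).nonempty
    obtain ⟨⟨hδ0, hδε⟩, hδgood⟩ := hδmem
    refine ⟨δ, (coe_pos_iff F δ).mpr hδ0, not_not.mp hδgood, ?_⟩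
    rw [hS2 δ]
    have hle2 : sSup ((fun x => g x - (δ:ℝ) * x) '' Set.Icc (A:ℝ) (B:ℝ))
        ≤ s + (δ:ℝ) * M := by
      apply csSup_le (hS2ne δ)
      rintro z ⟨x, hx, rfl⟩
      show g x - (δ:ℝ) * x ≤ s + (δ:ℝ) * M
      have h1 : g x ≤ s := le_csSup hS1bdd ⟨x, hx, rfl⟩
      have h2 : |x| ≤ M := habs x hx
      have h3 : -|x| ≤ x := neg_abs_le x
      nlinarith [mul_nonneg (le_of_lt hδ0) (by linarith : (0:ℝ) ≤ x + M)]
    have hMne : M ≠ 0 := ne_of_gt hM0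
    have h2εM : 2 * ε * M = (y:ℝ) - s := by
      rw [hε]; field_simp
    nlinarith [mul_lt_mul_of_pos_right hδε hM0]
  · rintro ⟨δ, hδpos, hsep, hlt⟩
    rw [hS2 δ] at hlt
    have hδR : (0:ℝ) < (δ:ℝ) := (coe_pos_iff F δ).mp hδpos
    refine lt_of_le_of_lt ?_ hlt
    apply csSup_le hS1ne
    rintro z ⟨x, hx, rfl⟩
    have h1 : g x - (δ:ℝ)*x ≤ sSup ((fun x => g x - (δ:ℝ) * x) '' Set.Icc (A:ℝ) (B:ℝ)) :=
      le_csSup (hS2bdd δ) ⟨x, hx, rfl⟩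
    have h2 : |x| ≤ M := habs x hx
    have h3 : x ≤ |x| := le_abs_self x
    nlinarith [mul_nonneg (le_of_lt hδR) (by linarith : (0:ℝ) ≤ M - x)]
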